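/- Let p > 2 be a prime, ζ a primitive p-th root of unity, and π = (1-ζ)ℤ[ζ]. For every α ∈ ℤ[ζ] with α ≢ 0 mod π, there exists b ∈ ℤ such that α^p ≡ b^p mod π^(p+1). -/

import Mathlib

open NumberField Polynomial Finset

theorem stmt1 (p : ℕ+) (hp : (p : ℕ).Prime) (hp2 : 2 < (p : ℕ))
    {K : Type*} [Field K] [NumberField K] [IsCyclotomicExtension {(p : ℕ)} ℚ K]
    (ζ : 𝓞 K) (hζ : IsPrimitiveRoot ζ (p : ℕ))
    (α : 𝓞 K) (hα : α ∉ Ideal.span {1 - ζ}) :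
    ∃ b : ℤ, α ^ (p : ℕ) - (b : 𝓞 K) ^ (p : ℕ) ∈ (Ideal.span {1 - ζ}) ^ ((p : ℕ) + 1) := by
  classical
  have hppos : 0 < (p : ℕ) := hp.pos
  haveI : Fact (p : ℕ).Prime := ⟨hp⟩
  haveI : NeZero (p : ℕ) := ⟨hppos.ne'⟩
  -- the primitive root in K
  have hζK : IsPrimitiveRoot (algebraMap (𝓞 K) K ζ) (p : ℕ) :=
    hζ.map_of_injective RingOfIntegers.coe_injective
  have hζK' : IsPrimitiveRoot (algebraMap (𝓞 K) K ζ) ((p : ℕ+) : ℕ) := hζK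
  have htoInt : hζK'.toInteger = ζ := rfl
  -- every element of the ring of integers is congruent to an integer mod (1 - ζ)
  have hexists : ∀ x : 𝓞 K, ∃ c : ℤ, (1 - ζ) ∣ (x - (c : 𝓞 K)) := by
    intro x
    obtain ⟨f, hf⟩ := hζK'.subOneIntegralPowerBasis.exists_eq_aeval' x
    refine ⟨f.coeff 0, ?_⟩
    have hgen : hζK'.subOneIntegralPowerBasis.gen = ζ - 1 := by
      rw [hζK'.subOneIntegralPowerBasis_gen]; ext; simp
    have hsplit := congrArg (aeval (ζ - 1 : 𝓞 K)) (X_mul_divX_add f)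
    simp only [map_add, map_mul, aeval_X, aeval_C, algebraMap_int_eq, eq_intCast, map_intCast] at hsplit
    rw [hf, hgen, ← hsplit]
    have : (ζ - 1) * aeval (ζ - 1) f.divX + (f.coeff 0 : 𝓞 K) - (f.coeff 0 : 𝓞 K)
        = -((1 - ζ) * aeval (ζ - 1) f.divX) := by ring
    rw [this]
    exact (dvd_neg).mpr (dvd_mul_right _ _)
  obtain ⟨a, ha⟩ := hexists α
  obtain ⟨s, hs⟩ := ha
  -- (1 - ζ) divides p
  have hlamp : (1 - ζ) ∣ ((p : ℕ) : 𝓞 K) := by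
    have h1 := hζK'.toInteger_sub_one_dvd_prime'
    rw [htoInt] at h1
    have h2 : (ζ - 1) ∣ ((p : ℕ) : 𝓞 K) := by exact_mod_cast h1
    have := h2.neg_left
    simpa using this
  -- p does not divide a
  have hpa : ¬ ((p : ℤ) ∣ a) := by
    intro h
    apply hα
    rw [Ideal.mem_span_singleton]
    have hda : (1 - ζ) ∣ ((a : ℤ) : 𝓞 K) := by
      obtain ⟨m, hm⟩ := h
      have : ((a : ℤ) : 𝓞 K) = ((p : ℕ) : 𝓞 K) * ((m : ℤ) : 𝓞 K) := by
        rw [hm]; push_cast; ring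
      rw [this]
      exact hlamp.mul_right _
    have := dvd_add (Dvd.intro s hs.symm) hda
    simpa using this
  obtain ⟨s₀, hs₀⟩ := hexists s
  -- choose the right exponent k
  set k : ℕ := (((-s₀ : ℤ) : ZMod (p : ℕ)) * ((a : ZMod (p : ℕ)))⁻¹).val with hk_def
  have hklt : k < (p : ℕ) := ZMod.val_lt _
  have hdvd_int : ((p : ℕ) : ℤ) ∣ (s₀ + a * k) := by
    have ha0 : ((a : ZMod (p : ℕ))) ≠ 0 := by
      simpa [ZMod.intCast_zmod_eq_zero_iff_dvd] using hpa
    have hz : ((s₀ + a * (k : ℤ) : ℤ) : ZMod (p : ℕ)) = 0 := by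
      push_cast
      rw [hk_def, ZMod.natCast_val, ZMod.cast_id]
      field_simp
      push_cast; ring
    exact_mod_cast (ZMod.intCast_zmod_eq_zero_iff_dvd _ _).mp hz
  have hgeom : ∀ j : ℕ, (1 - ζ) ∣ (1 - ζ ^ j) := fun j => by
    simpa using (sub_dvd_pow_sub_pow (1 : 𝓞 K) ζ j)
  have hη : (ζ ^ k) ∈ nthRootsFinset (p : ℕ) (1 : 𝓞 K) := by
    rw [mem_nthRootsFinset hppos (1 : 𝓞 K), ← pow_mul, mul_comm, pow_mul, hζ.pow_eq_one, one_pow]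
  -- the special factor is divisible by (1-ζ)^2
  have hfac : (1 - ζ) ^ 2 ∣ (α - ζ ^ k * (a : 𝓞 K)) := by
    have h1 : α - ζ ^ k * (a : 𝓞 K)
        = (1 - ζ) * s + (a : 𝓞 K) * (1 - ζ ^ k) := by linear_combination hs
    have h2 : (1 : 𝓞 K) - ζ ^ k = (1 - ζ) * (∑ j ∈ range k, ζ ^ j) := by
      linear_combination geom_sum_mul ζ k
    have h3 : (1 - ζ) ∣ (s + (a : 𝓞 K) * ∑ j ∈ range k, ζ ^ j) := by
      have hsum : (1 - ζ) ∣ ((∑ j ∈ range k, ζ ^ j) - (k : 𝓞 K)) := by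
        have hsk : (∑ j ∈ range k, ζ ^ j) - (k : 𝓞 K) = ∑ j ∈ range k, (ζ ^ j - 1) := by
          rw [Finset.sum_sub_distrib]; simp
        rw [hsk]
        refine Finset.dvd_sum (fun j _ => ?_)
        have := (hgeom j).neg_right
        simpa using this
      have hint : (1 - ζ) ∣ (((s₀ + a * (k : ℤ)) : ℤ) : 𝓞 K) := by
        obtain ⟨m, hm⟩ := hdvd_int
        have : (((s₀ + a * (k : ℤ)) : ℤ) : 𝓞 K) = ((p : ℕ) : 𝓞 K) * ((m : ℤ) : 𝓞 K) := by
          rw [hm]; push_cast; ring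
        rw [this]
        exact hlamp.mul_right _
      have hrw : s + (a : 𝓞 K) * (∑ j ∈ range k, ζ ^ j)
          = (s - (s₀ : 𝓞 K)) + (a : 𝓞 K) * ((∑ j ∈ range k, ζ ^ j) - (k : 𝓞 K))
            + (((s₀ + a * (k : ℤ)) : ℤ) : 𝓞 K) := by
        push_cast; ring
      rw [hrw]
      exact dvd_add (dvd_add hs₀ (hsum.mul_left _)) hint
    rw [h1, h2]
    have : (1 - ζ) * s + (a : 𝓞 K) * ((1 - ζ) * (∑ j ∈ range k, ζ ^ j))
        = (1 - ζ) * (s + (a : 𝓞 K) * ∑ j ∈ range k, ζ ^ j) := by ring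
    rw [this, sq]
    exact mul_dvd_mul_left _ h3
  -- put everything together
  refine ⟨a, ?_⟩
  rw [Ideal.span_singleton_pow, Ideal.mem_span_singleton]
  rw [hζ.pow_sub_pow_eq_prod_sub_mul α ((a : ℤ) : 𝓞 K) hppos]
  rw [Finset.prod_eq_prod_diff_singleton_mul hη]
  have hrest : (1 - ζ) ^ ((p : ℕ) - 1)
      ∣ ∏ η ∈ nthRootsFinset (p : ℕ) (1 : 𝓞 K) \ {ζ ^ k}, (α - η * (a : 𝓞 K)) := by
    have hcard : (nthRootsFinset (p : ℕ) (1 : 𝓞 K) \ {ζ ^ k}).card = (p : ℕ) - 1 := by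
      rw [Finset.card_sdiff_of_subset (by simpa using hη), hζ.card_nthRootsFinset, Finset.card_singleton]
    calc (1 - ζ) ^ ((p : ℕ) - 1)
        = ∏ _η ∈ nthRootsFinset (p : ℕ) (1 : 𝓞 K) \ {ζ ^ k}, (1 - ζ) := by
          rw [Finset.prod_const, hcard]
      _ ∣ ∏ η ∈ nthRootsFinset (p : ℕ) (1 : 𝓞 K) \ {ζ ^ k}, (α - η * (a : 𝓞 K)) := by
          refine Finset.prod_dvd_prod_of_dvd _ _ (fun η hη' => ?_)
          have hη1 : η ^ (p : ℕ) = 1 :=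
            (mem_nthRootsFinset hppos (1 : 𝓞 K)).mp (Finset.mem_sdiff.mp hη').1
          obtain ⟨j, _, hj⟩ := hζ.eq_pow_of_pow_eq_one hη1
          have : α - η * (a : 𝓞 K) = (α - (a : 𝓞 K)) + (a : 𝓞 K) * (1 - η) := by ring
          rw [this]
          exact dvd_add (Dvd.intro s hs.symm) ((hj ▸ hgeom j).mul_left _)
  have hfinal := mul_dvd_mul hrest hfac
  rwa [← pow_add, (by omega : (p : ℕ) - 1 + 2 = (p : ℕ) + 1)] at hfinal
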